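/- Let pa, ε1, ε2, ε3 be random variables on a probability space taking values in finite sets, and define Y = g1(pa, ε1), nd = g2(pa, ε2), dc = g3(Y, ε3) for arbitrary functions g1, g2, g3, where ε1 is independent of pa, ε2 is independent of the pair (pa, ε1), and ε3 is independent of the triple (pa, ε1, ε2). Then I(pa; (nd, dc)) ≤ I(pa; (nd, Y)). -/

import Mathlib

open Finset

/-- Probability of the event `U = u` under the weight function `μ`
on a finite sample space. -/
noncomputable def probOf {Ω α : Type} [Fintype Ω] [DecidableEq α]
    (μ : Ω → ℝ) (U : Ω → α) (u : α) : ℝ :=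
  ∑ ω, if U ω = u then μ ω else 0

/-- Shannon entropy (natural logarithm) of the random variable `U`
under the weight function `μ`. -/
noncomputable def entropy {Ω α : Type} [Fintype Ω] [Fintype α] [DecidableEq α]
    (μ : Ω → ℝ) (U : Ω → α) : ℝ :=
  -∑ u, probOf μ U u * Real.log (probOf μ U u)

/-- Mutual information `I(U;V) = H(U) + H(V) - H(U,V)`. -/
noncomputable def mutualInfo {Ω α β : Type} [Fintype Ω] [Fintype α] [Fintype β]
    [DecidableEq α] [DecidableEq β] (μ : Ω → ℝ) (U : Ω → α) (V : Ω → β) : ℝ :=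
  entropy μ U + entropy μ V - entropy μ (fun ω => (U ω, V ω))

/-- The conditional weight function given the event `W = w`. -/
noncomputable def condWeight {Ω γ : Type} [Fintype Ω] [DecidableEq γ]
    (μ : Ω → ℝ) (W : Ω → γ) (w : γ) : Ω → ℝ :=
  fun ω => if W ω = w then μ ω / probOf μ W w else 0

/-- Conditional mutual information
`I(U;V|W) = ∑ w, P(W = w) * I(U;V | W = w)`. -/
noncomputable def condMutualInfo {Ω α β γ : Type} [Fintype Ω]
    [Fintype α] [Fintype β] [Fintype γ]
    [DecidableEq α] [DecidableEq β] [DecidableEq γ]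
    (μ : Ω → ℝ) (U : Ω → α) (V : Ω → β) (W : Ω → γ) : ℝ :=
  ∑ w, probOf μ W w * mutualInfo (condWeight μ W w) U V

/-- `μ` is a probability weight function on the finite sample space. -/
def IsProb {Ω : Type} [Fintype Ω] (μ : Ω → ℝ) : Prop :=
  (∀ ω, 0 ≤ μ ω) ∧ ∑ ω, μ ω = 1

/-- Independence of two finite-valued random variables. -/
def IndepRV {Ω α β : Type} [Fintype Ω] [DecidableEq α] [DecidableEq β]
    (μ : Ω → ℝ) (U : Ω → α) (V : Ω → β) : Prop :=
  ∀ u v, probOf μ (fun ω => (U ω, V ω)) (u, v) = probOf μ U u * probOf μ V v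

section
variable {Ω α β γ : Type} [Fintype Ω]

lemma probOf_nonneg [DecidableEq α] {μ : Ω → ℝ} (hμ : ∀ ω, 0 ≤ μ ω)
    (U : Ω → α) (u : α) : 0 ≤ probOf μ U u := by
  refine Finset.sum_nonneg fun ω _ => ?_
  split <;> [exact hμ ω; exact le_rfl]

lemma sum_probOf [Fintype α] [DecidableEq α] (μ : Ω → ℝ) (U : Ω → α) :
    ∑ u, probOf μ U u = ∑ ω, μ ω := by
  unfold probOf
  rw [Finset.sum_comm]
  simp

lemma probOf_fst [Fintype β] [DecidableEq α] [DecidableEq β]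
    (μ : Ω → ℝ) (U : Ω → α) (V : Ω → β) (u : α) :
    probOf μ U u = ∑ v, probOf μ (fun ω => (U ω, V ω)) (u, v) := by
  unfold probOf
  rw [Finset.sum_comm]
  refine Finset.sum_congr rfl fun ω _ => ?_
  simp [Prod.ext_iff, ite_and]

lemma probOf_snd [Fintype α] [DecidableEq α] [DecidableEq β]
    (μ : Ω → ℝ) (U : Ω → α) (V : Ω → β) (v : β) :
    probOf μ V v = ∑ u, probOf μ (fun ω => (U ω, V ω)) (u, v) := by
  unfold probOf
  rw [Finset.sum_comm]
  refine Finset.sum_congr rfl fun ω _ => ?_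
  simp [Prod.ext_iff, ite_and]

lemma probOf_pair_le_fst [DecidableEq α] [DecidableEq β]
    {μ : Ω → ℝ} (hμ : ∀ ω, 0 ≤ μ ω) (U : Ω → α) (V : Ω → β) (u : α) (v : β) :
    probOf μ (fun ω => (U ω, V ω)) (u, v) ≤ probOf μ U u := by
  refine Finset.sum_le_sum fun ω _ => ?_
  by_cases h : U ω = u <;> simp [h, Prod.ext_iff, hμ ω]
  split <;> [exact le_rfl; exact hμ ω]

lemma probOf_pair_le_snd [DecidableEq α] [DecidableEq β]
    {μ : Ω → ℝ} (hμ : ∀ ω, 0 ≤ μ ω) (U : Ω → α) (V : Ω → β) (u : α) (v : β) :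
    probOf μ (fun ω => (U ω, V ω)) (u, v) ≤ probOf μ V v := by
  refine Finset.sum_le_sum fun ω _ => ?_
  by_cases h : V ω = v <;> simp [h, Prod.ext_iff, hμ ω]
  split <;> [exact le_rfl; exact hμ ω]

lemma probOf_congr [DecidableEq α] {μ : Ω → ℝ} {U U' : Ω → α}
    (h : ∀ ω, μ ω ≠ 0 → U ω = U' ω) (u : α) :
    probOf μ U u = probOf μ U' u := by
  refine Finset.sum_congr rfl fun ω _ => ?_
  by_cases hm : μ ω = 0
  · simp [hm]
  · rw [h ω hm]

lemma probOf_comp [Fintype α] [DecidableEq α] [DecidableEq β]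
    (μ : Ω → ℝ) (X : Ω → α) (f : α → β) (b : β) :
    probOf μ (fun ω => f (X ω)) b = ∑ x, if f x = b then probOf μ X x else 0 := by
  unfold probOf
  have : ∀ x : α, (if f x = b then ∑ ω, if X ω = x then μ ω else 0 else 0)
      = ∑ ω, if X ω = x ∧ f x = b then μ ω else 0 := by
    intro x
    split
    · next h => refine Finset.sum_congr rfl fun ω _ => by simp [h]
    · next h => refine (Finset.sum_eq_zero fun ω _ => by simp [h]).symm
  simp only [this]
  rw [Finset.sum_comm]
  refine Finset.sum_congr rfl fun ω _ => ?_
  rw [Finset.sum_eq_single (X ω)]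
  · simp
  · intro x _ hx
    simp [Ne.symm hx]
  · simp

end

section
variable {Ω α β γ : Type} [Fintype Ω]

lemma entropy_congr [Fintype α] [DecidableEq α] {μ : Ω → ℝ} {U U' : Ω → α}
    (h : ∀ ω, μ ω ≠ 0 → U ω = U' ω) :
    entropy μ U = entropy μ U' := by
  unfold entropy
  congr 1
  exact Finset.sum_congr rfl fun u _ => by rw [probOf_congr h]

lemma mutualInfo_congr [Fintype α] [Fintype β] [DecidableEq α] [DecidableEq β]
    {μ : Ω → ℝ} (U : Ω → α) {V V' : Ω → β}
    (h : ∀ ω, μ ω ≠ 0 → V ω = V' ω) :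
    mutualInfo μ U V = mutualInfo μ U V' := by
  unfold mutualInfo
  rw [entropy_congr h, entropy_congr (U := fun ω => (U ω, V ω))
    (U' := fun ω => (U ω, V' ω)) (fun ω hm => by show (U ω, V ω) = (U ω, V' ω); rw [h ω hm])]

lemma entropy_comp_inj [Fintype α] [Fintype β] [DecidableEq α] [DecidableEq β]
    (μ : Ω → ℝ) (X : Ω → α) (f : α → β) (hf : Function.Injective f) :
    entropy μ (fun ω => f (X ω)) = entropy μ X := by
  unfold entropy
  congr 1
  have h1 : ∀ a : α, probOf μ (fun ω => f (X ω)) (f a) = probOf μ X a := by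
    intro a
    unfold probOf
    exact Finset.sum_congr rfl fun ω _ => by simp [hf.eq_iff]
  set t : β → ℝ := fun b => probOf μ (fun ω => f (X ω)) b *
      Real.log (probOf μ (fun ω => f (X ω)) b) with ht
  have h0 : ∀ b ∈ Finset.univ, b ∉ Finset.univ.image f → t b = 0 := by
    intro b _ hb
    have hz : probOf μ (fun ω => f (X ω)) b = 0 := by
      refine Finset.sum_eq_zero fun ω _ => ?_
      have hne : f (X ω) ≠ b := fun hE => hb (by
        rw [← hE]; exact Finset.mem_image_of_mem f (Finset.mem_univ _))
      simp [hne]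
    simp [ht, hz]
  calc ∑ b, t b = ∑ b ∈ Finset.univ.image f, t b :=
        (Finset.sum_subset (Finset.subset_univ _) h0).symm
    _ = ∑ a, t (f a) := Finset.sum_image fun a _ a' _ h => hf h
    _ = ∑ a, probOf μ X a * Real.log (probOf μ X a) := by
        refine Finset.sum_congr rfl fun a _ => ?_
        simp [ht, h1 a]

lemma mutualInfo_comp_inj [Fintype α] [Fintype β] [Fintype γ]
    [DecidableEq α] [DecidableEq β] [DecidableEq γ]
    (μ : Ω → ℝ) (U : Ω → α) (X : Ω → β) (f : β → γ) (hf : Function.Injective f) :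
    mutualInfo μ U (fun ω => f (X ω)) = mutualInfo μ U X := by
  unfold mutualInfo
  rw [entropy_comp_inj μ X f hf,
    show (fun ω => (U ω, f (X ω))) = (fun ω => Prod.map id f (U ω, X ω)) from rfl,
    entropy_comp_inj μ (fun ω => (U ω, X ω)) (Prod.map id f)
      (Function.Injective.prodMap Function.injective_id hf)]

end

section
variable {Ω α β γ : Type} [Fintype Ω]

lemma isProb_condWeight [DecidableEq γ] {μ : Ω → ℝ} (hμ : ∀ ω, 0 ≤ μ ω)
    (W : Ω → γ) (w : γ) (hw : probOf μ W w ≠ 0) : IsProb (condWeight μ W w) := by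
  constructor
  · intro ω
    unfold condWeight
    split
    · exact div_nonneg (hμ ω) (probOf_nonneg hμ W w)
    · exact le_rfl
  · unfold condWeight
    have : ∀ ω : Ω, (if W ω = w then μ ω / probOf μ W w else 0)
        = (if W ω = w then μ ω else 0) / probOf μ W w := by
      intro ω; split <;> simp
    simp only [this, ← Finset.sum_div]
    rw [show (∑ ω, if W ω = w then μ ω else 0) = probOf μ W w from rfl,
      div_self hw]

lemma probOf_condWeight [DecidableEq α] [DecidableEq γ] (μ : Ω → ℝ)
    (X : Ω → α) (V : Ω → γ) (v : γ) (x : α) :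
    probOf (condWeight μ V v) X x
      = probOf μ (fun ω => (X ω, V ω)) (x, v) / probOf μ V v := by
  unfold probOf condWeight
  rw [Finset.sum_div]
  refine Finset.sum_congr rfl fun ω _ => ?_
  by_cases h1 : X ω = x <;> by_cases h2 : V ω = v <;> simp [h1, h2, Prod.ext_iff, probOf]

/-- Entropy chain rule: `H(X,V) = H(V) + ∑_v P(v) H(X | V = v)`. -/
lemma entropy_chain [Fintype α] [Fintype γ] [DecidableEq α] [DecidableEq γ]
    {μ : Ω → ℝ} (hμ : ∀ ω, 0 ≤ μ ω) (X : Ω → α) (V : Ω → γ) :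
    entropy μ (fun ω => (X ω, V ω))
      = entropy μ V + ∑ v, probOf μ V v * entropy (condWeight μ V v) X := by
  have key : ∀ v : γ, probOf μ V v * entropy (condWeight μ V v) X
      = -∑ x, (probOf μ (fun ω => (X ω, V ω)) (x, v) *
          Real.log (probOf μ (fun ω => (X ω, V ω)) (x, v))
        - probOf μ (fun ω => (X ω, V ω)) (x, v) * Real.log (probOf μ V v)) := by
    intro v
    unfold entropy
    rw [mul_neg, Finset.mul_sum, neg_inj]
    refine Finset.sum_congr rfl fun x _ => ?_
    rw [probOf_condWeight]
    set p := probOf μ (fun ω => (X ω, V ω)) (x, v) with hp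
    set q := probOf μ V v with hq
    by_cases hqz : q = 0
    · have hpz : p = 0 := by
        have h1 : p ≤ q := probOf_pair_le_snd hμ X V x v
        have h2 : (0:ℝ) ≤ p := probOf_nonneg hμ _ _
        linarith
      simp [hpz, hqz]
    · by_cases hpz : p = 0
      · simp [hpz]
      · rw [Real.log_div hpz hqz]
        field_simp
  rw [Finset.sum_congr rfl fun v _ => key v]
  unfold entropy
  rw [Fintype.sum_prod_type]
  have hm : ∀ v : γ, probOf μ V v = ∑ x, probOf μ (fun ω => (X ω, V ω)) (x, v) :=
    fun v => probOf_snd μ X V v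
  have h2 : ∑ v, probOf μ V v * Real.log (probOf μ V v)
      = ∑ v, ∑ x, probOf μ (fun ω => (X ω, V ω)) (x, v) * Real.log (probOf μ V v) := by
    refine Finset.sum_congr rfl fun v _ => ?_
    rw [hm v, Finset.sum_mul]
  rw [Finset.sum_comm (γ := α)]
  simp only [Finset.sum_sub_distrib, neg_sub, Finset.sum_add_distrib,
    Finset.sum_neg_distrib, ← h2]
  ring

end

section
variable {Ω α β γ : Type} [Fintype Ω]

/-- Chain rule: `I(U;(W,V)) = I(U;V) + I(U;W|V)`. -/
lemma mutualInfo_chain [Fintype α] [Fintype β] [Fintype γ]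
    [DecidableEq α] [DecidableEq β] [DecidableEq γ]
    {μ : Ω → ℝ} (hμ : ∀ ω, 0 ≤ μ ω) (U : Ω → α) (W : Ω → β) (V : Ω → γ) :
    mutualInfo μ U (fun ω => (W ω, V ω))
      = mutualInfo μ U V + condMutualInfo μ U W V := by
  unfold condMutualInfo mutualInfo
  have hsplit : ∑ v, probOf μ V v * (entropy (condWeight μ V v) U
      + entropy (condWeight μ V v) W
      - entropy (condWeight μ V v) (fun ω => (U ω, W ω)))
    = (∑ v, probOf μ V v * entropy (condWeight μ V v) U)
      + (∑ v, probOf μ V v * entropy (condWeight μ V v) W)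
      - ∑ v, probOf μ V v * entropy (condWeight μ V v) (fun ω => (U ω, W ω)) := by
    rw [← Finset.sum_add_distrib, ← Finset.sum_sub_distrib]
    refine Finset.sum_congr rfl fun v _ => by ring
  rw [hsplit]
  have e1 := entropy_chain hμ U V
  have e2 := entropy_chain hμ W V
  have e3 := entropy_chain hμ (fun ω => (U ω, W ω)) V
  have e4 : entropy μ (fun ω => (U ω, (W ω, V ω)))
      = entropy μ (fun ω => ((U ω, W ω), V ω)) := by
    rw [show (fun ω => ((U ω, W ω), V ω))
        = (fun ω => (fun p : α × β × γ => ((p.1, p.2.1), p.2.2)) (U ω, (W ω, V ω)))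
        from rfl]
    rw [entropy_comp_inj μ (fun ω => (U ω, (W ω, V ω)))
      (fun p : α × β × γ => ((p.1, p.2.1), p.2.2))
      (fun p q h => by
        simp only [Prod.mk.injEq] at h
        exact Prod.ext h.1.1 (Prod.ext h.1.2 h.2))]
  rw [e4]
  linarith [e1, e2, e3]

/-- Nonnegativity of mutual information. -/
lemma mutualInfo_nonneg [Fintype α] [Fintype β] [DecidableEq α] [DecidableEq β]
    {μ : Ω → ℝ} (hμ : IsProb μ) (U : Ω → α) (V : Ω → β) :
    0 ≤ mutualInfo μ U V := by
  obtain ⟨hnn, hsum⟩ := hμ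
  set p : α → β → ℝ := fun u v => probOf μ (fun ω => (U ω, V ω)) (u, v) with hp
  set a : α → ℝ := fun u => probOf μ U u with ha
  set b : β → ℝ := fun v => probOf μ V v with hb
  have hEU : entropy μ U = -∑ u, ∑ v, p u v * Real.log (a u) := by
    unfold entropy
    congr 1
    refine Finset.sum_congr rfl fun u _ => ?_
    have : a u = ∑ v, p u v := probOf_fst μ U V u
    nth_rewrite 1 [show probOf μ U u = a u from rfl, this]
    rw [Finset.sum_mul]
  have hEV : entropy μ V = -∑ u, ∑ v, p u v * Real.log (b v) := by
    unfold entropy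
    rw [Finset.sum_comm (γ := α)]
    congr 1
    refine Finset.sum_congr rfl fun v _ => ?_
    have : b v = ∑ u, p u v := probOf_snd μ U V v
    nth_rewrite 1 [show probOf μ V v = b v from rfl, this]
    rw [Finset.sum_mul]
  have hEUV : entropy μ (fun ω => (U ω, V ω))
      = -∑ u, ∑ v, p u v * Real.log (p u v) := by
    unfold entropy
    rw [Fintype.sum_prod_type]
  have hterm : ∀ u v, p u v * Real.log (a u) + p u v * Real.log (b v)
      - p u v * Real.log (p u v) ≤ a u * b v - p u v := by
    intro u v
    have hp0 : 0 ≤ p u v := probOf_nonneg hnn _ _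
    rcases eq_or_lt_of_le hp0 with hz | hpos
    · rw [← hz]
      simp
      exact mul_nonneg (probOf_nonneg hnn U u) (probOf_nonneg hnn V v)
    · have hap : p u v ≤ a u := probOf_pair_le_fst hnn U V u v
      have hbp : p u v ≤ b v := probOf_pair_le_snd hnn U V u v
      have ha0 : 0 < a u := lt_of_lt_of_le hpos hap
      have hb0 : 0 < b v := lt_of_lt_of_le hpos hbp
      have hlog : Real.log (a u * b v / p u v) ≤ a u * b v / p u v - 1 :=
        Real.log_le_sub_one_of_pos (by positivity)
      rw [Real.log_div (by positivity) (ne_of_gt hpos),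
        Real.log_mul (ne_of_gt ha0) (ne_of_gt hb0)] at hlog
      have h2 := mul_le_mul_of_nonneg_left hlog (le_of_lt hpos)
      have h3 : p u v * (a u * b v / p u v - 1) = a u * b v - p u v := by
        field_simp
      nlinarith [h2, h3]
  have hb1 : ∑ u, ∑ v, (p u v * Real.log (a u) + p u v * Real.log (b v)
      - p u v * Real.log (p u v)) ≤ ∑ u, ∑ v, (a u * b v - p u v) :=
    Finset.sum_le_sum fun u _ => Finset.sum_le_sum fun v _ => hterm u v
  have hsa : ∑ u, a u = 1 := by rw [ha]; rw [sum_probOf μ U, hsum]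
  have hsb : ∑ v, b v = 1 := by rw [hb]; rw [sum_probOf μ V, hsum]
  have hsp : ∑ u, ∑ v, p u v = 1 := by
    have : ∀ u, ∑ v, p u v = a u := fun u => (probOf_fst μ U V u).symm
    simp only [this, hsa]
  have hb2 : ∑ u, ∑ v, (a u * b v - p u v) = 0 := by
    simp only [Finset.sum_sub_distrib]
    rw [hsp, ← Finset.sum_mul_sum, hsa, hsb]
    norm_num
  have hmain : mutualInfo μ U V
      = -∑ u, ∑ v, (p u v * Real.log (a u) + p u v * Real.log (b v)
          - p u v * Real.log (p u v)) := by
    unfold mutualInfo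
    rw [hEU, hEV, hEUV]
    simp only [Finset.sum_sub_distrib, Finset.sum_add_distrib]
    ring
  rw [hmain]
  linarith [hb1, hb2]

end

section
variable {Ω α β γ : Type} [Fintype Ω]

lemma mutualInfo_eq_zero_of_indep [Fintype α] [Fintype β] [DecidableEq α]
    [DecidableEq β] {μ : Ω → ℝ} (hμ : IsProb μ) {U : Ω → α} {Z : Ω → β}
    (h : IndepRV μ Z U) : mutualInfo μ U Z = 0 := by
  obtain ⟨hnn, hsum⟩ := hμ
  have hswap : ∀ u z, probOf μ (fun ω => (U ω, Z ω)) (u, z)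
      = probOf μ U u * probOf μ Z z := by
    intro u z
    have h1 : probOf μ (fun ω => (U ω, Z ω)) (u, z)
        = probOf μ (fun ω => (Z ω, U ω)) (z, u) := by
      unfold probOf
      refine Finset.sum_congr rfl fun ω _ => ?_
      simp [Prod.ext_iff, and_comm]
    rw [h1, h z u]; ring
  have hsa : ∑ u, probOf μ U u = 1 := by rw [sum_probOf, hsum]
  have hsb : ∑ z, probOf μ Z z = 1 := by rw [sum_probOf, hsum]
  have hkey : entropy μ (fun ω => (U ω, Z ω)) = entropy μ U + entropy μ Z := by
    unfold entropy
    rw [Fintype.sum_prod_type]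
    simp only [hswap]
    have hterm : ∀ x y : ℝ, x * y * Real.log (x * y)
        = x * Real.log x * y + x * (y * Real.log y) := by
      intro x y
      by_cases hx : x = 0
      · simp [hx]
      by_cases hy : y = 0
      · simp [hy]
      rw [Real.log_mul hx hy]; ring
    simp only [hterm, Finset.sum_add_distrib, ← Finset.sum_mul, ← Finset.mul_sum,
      hsa, hsb, mul_one, one_mul]
    ring
  unfold mutualInfo
  rw [hkey]; ring

lemma indep_condWeight {E τ σ : Type} [Fintype E] [Fintype τ]
    [DecidableEq E] [DecidableEq τ] [DecidableEq σ]
    {μ : Ω → ℝ} {ε : Ω → E} {T : Ω → τ} (h : IndepRV μ ε T)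
    (f : τ → σ) (s : σ) (hs : probOf μ (fun ω => f (T ω)) s ≠ 0) :
    IndepRV (condWeight μ (fun ω => f (T ω)) s) ε T := by
  set ps := probOf μ (fun ω => f (T ω)) s with hps
  set ν := condWeight μ (fun ω => f (T ω)) s with hν
  have hpair : ∀ (e : E) (t : τ),
      probOf μ (fun ω => ((ε ω, T ω), f (T ω))) ((e, t), s)
      = if f t = s then probOf μ (fun ω => (ε ω, T ω)) (e, t) else 0 := by
    intro e t
    by_cases hft : f t = s
    · rw [if_pos hft]
      unfold probOf
      refine Finset.sum_congr rfl fun ω _ => ?_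
      by_cases hp : (ε ω, T ω) = (e, t)
      · obtain ⟨he', ht'⟩ : ε ω = e ∧ T ω = t := by simpa [Prod.ext_iff] using hp
        have hfs : f (T ω) = s := by rw [ht']; exact hft
        simp [hp, hfs]
      · have hp' : ¬ (ε ω = e ∧ T ω = t) := by simpa [Prod.ext_iff] using hp
        simp only [Prod.mk.injEq]
        rw [if_neg (by tauto), if_neg (by tauto)]
    · rw [if_neg hft]
      refine Finset.sum_eq_zero fun ω _ => ?_
      have hne : ((ε ω, T ω), f (T ω)) ≠ ((e, t), s) := by
        intro hE
        obtain ⟨⟨he1, ht1⟩, h2⟩ : (ε ω = e ∧ T ω = t) ∧ f (T ω) = s := by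
          simpa [Prod.ext_iff] using hE
        exact hft (ht1 ▸ h2)
      simp [hne]
  have hTnum : ∀ t : τ, probOf μ (fun ω => (T ω, f (T ω))) (t, s)
      = if f t = s then probOf μ T t else 0 := by
    intro t
    by_cases hft : f t = s
    · rw [if_pos hft]
      unfold probOf
      refine Finset.sum_congr rfl fun ω _ => ?_
      by_cases hT : T ω = t
      · simp [hT, hft]
      · simp only [Prod.mk.injEq]
        rw [if_neg (by tauto), if_neg hT]
    · rw [if_neg hft]
      refine Finset.sum_eq_zero fun ω _ => ?_
      have hne : (T ω, f (T ω)) ≠ (t, s) := by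
        intro hE
        obtain ⟨h1, h2⟩ : T ω = t ∧ f (T ω) = s := by simpa [Prod.ext_iff] using hE
        exact hft (h1 ▸ h2)
      simp [hne]
  have hjoint : ∀ (e : E) (t : τ), probOf ν (fun ω => (ε ω, T ω)) (e, t)
      = if f t = s then probOf μ ε e * probOf μ T t / ps else 0 := by
    intro e t
    rw [hν, probOf_condWeight μ (fun ω => (ε ω, T ω)) (fun ω => f (T ω)) s (e, t)]
    rw [show (fun ω => ((ε ω, T ω), f (T ω))) = (fun ω => ((ε ω, T ω), f (T ω))) from rfl]
    rw [hpair e t, h e t]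
    split <;> simp [hps]
  have hT : ∀ t : τ, probOf ν T t = if f t = s then probOf μ T t / ps else 0 := by
    intro t
    rw [hν, probOf_condWeight μ T (fun ω => f (T ω)) s t]
    rw [hTnum t]
    split <;> simp [hps]
  have hE : ∀ e, probOf ν ε e = probOf μ ε e := by
    intro e
    rw [probOf_fst ν ε T e]
    simp only [hjoint]
    have hrw : ∀ t, (if f t = s then probOf μ ε e * probOf μ T t / ps else 0)
        = probOf μ ε e / ps * (if f t = s then probOf μ T t else 0) := by
      intro t; split <;> ring
    simp only [hrw, ← Finset.mul_sum]
    rw [← probOf_comp μ T f s, ← hps, div_mul_cancel₀ _ hs]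
  intro e t
  rw [hjoint e t, hE e, hT t]
  split <;> ring

lemma indepRV_comp {E τ B C : Type} [Fintype E] [Fintype τ]
    [DecidableEq E] [DecidableEq τ] [DecidableEq B] [DecidableEq C]
    {ν : Ω → ℝ} {ε : Ω → E} {T : Ω → τ} (h : IndepRV ν ε T)
    (F : E → B) (g : τ → C) :
    IndepRV ν (fun ω => F (ε ω)) (fun ω => g (T ω)) := by
  intro b c
  have h1 : probOf ν (fun ω => (F (ε ω), g (T ω))) (b, c)
      = ∑ x : E × τ, if (F x.1, g x.2) = (b, c)
          then probOf ν (fun ω => (ε ω, T ω)) x else 0 := by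
    have := probOf_comp ν (fun ω => (ε ω, T ω)) (fun p => (F p.1, g p.2)) (b, c)
    simpa using this
  rw [h1, Fintype.sum_prod_type]
  have h2 : ∀ (e : E) (t : τ), (if (F e, g t) = (b, c)
        then probOf ν (fun ω => (ε ω, T ω)) (e, t) else 0)
      = (if F e = b then probOf ν ε e else 0) * (if g t = c then probOf ν T t else 0) := by
    intro e t
    rw [h e t]
    by_cases h3 : F e = b <;> by_cases h4 : g t = c <;>
      simp [h3, h4, Prod.ext_iff]
  simp only [h2]
  rw [← Finset.sum_mul_sum]
  rw [← probOf_comp ν ε F b, ← probOf_comp ν T g c]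

lemma condMutualInfo_nonneg [Fintype α] [Fintype β] [Fintype γ]
    [DecidableEq α] [DecidableEq β] [DecidableEq γ]
    {μ : Ω → ℝ} (hμ : ∀ ω, 0 ≤ μ ω) (U : Ω → α) (V : Ω → β) (W : Ω → γ) :
    0 ≤ condMutualInfo μ U V W := by
  refine Finset.sum_nonneg fun w _ => ?_
  by_cases hw : probOf μ W w = 0
  · simp [hw]
  · exact mul_nonneg (probOf_nonneg hμ W w)
      (mutualInfo_nonneg (isProb_condWeight hμ W w hw) U V)

end


/-- In the SCM `Y = g1(pa, ε1)`, `nd = g2(pa, ε2)`, `dc = g3(Y, ε3)`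
with the stated independences, `I(pa; (nd, dc)) ≤ I(pa; (nd, Y))`. -/
theorem stmt_0 {Ω A E1 E2 E3 YT NDT DCT : Type}
    [Fintype Ω] [Fintype A] [Fintype E1] [Fintype E2] [Fintype E3]
    [Fintype YT] [Fintype NDT] [Fintype DCT]
    [DecidableEq A] [DecidableEq E1] [DecidableEq E2] [DecidableEq E3]
    [DecidableEq YT] [DecidableEq NDT] [DecidableEq DCT]
    (μ : Ω → ℝ) (hμ : IsProb μ)
    (pa : Ω → A) (ε1 : Ω → E1) (ε2 : Ω → E2) (ε3 : Ω → E3)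
    (g1 : A → E1 → YT) (g2 : A → E2 → NDT) (g3 : YT → E3 → DCT)
    (Y : Ω → YT) (nd : Ω → NDT) (dc : Ω → DCT)
    (hY : ∀ ω, Y ω = g1 (pa ω) (ε1 ω))
    (hnd : ∀ ω, nd ω = g2 (pa ω) (ε2 ω))
    (hdc : ∀ ω, dc ω = g3 (Y ω) (ε3 ω))
    (h1 : IndepRV μ ε1 pa)
    (h2 : IndepRV μ ε2 (fun ω => (pa ω, ε1 ω)))
    (h3 : IndepRV μ ε3 (fun ω => (pa ω, ε1 ω, ε2 ω))) :
    mutualInfo μ pa (fun ω => (nd ω, dc ω)) ≤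
      mutualInfo μ pa (fun ω => (nd ω, Y ω)) := by
  obtain ⟨hnn, hsum⟩ := hμ
  set W : Ω → NDT × DCT := fun ω => (nd ω, dc ω) with hW
  set V : Ω → NDT × YT := fun ω => (nd ω, Y ω) with hV
  -- the structural function expressing V in terms of (pa, ε1, ε2)
  set f : A × E1 × E2 → NDT × YT := fun t => (g2 t.1 t.2.2, g1 t.1 t.2.1) with hf
  set T : Ω → A × E1 × E2 := fun ω => (pa ω, ε1 ω, ε2 ω) with hT
  have hVf : ∀ ω, V ω = f (T ω) := by
    intro ω
    simp only [hV, hf, hT]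
    rw [hnd ω, hY ω]
  -- Step D : I(pa; W | V) = 0
  have hD : condMutualInfo μ pa W V = 0 := by
    unfold condMutualInfo
    refine Finset.sum_eq_zero fun v _ => ?_
    by_cases hv : probOf μ V v = 0
    · simp [hv]
    · suffices hz : mutualInfo (condWeight μ V v) pa W = 0 by rw [hz, mul_zero]
      have hVeq : V = fun ω => f (T ω) := funext hVf
      have hv' : probOf μ (fun ω => f (T ω)) v ≠ 0 := by rw [← hVeq]; exact hv
      have hprob : IsProb (condWeight μ V v) := by
        rw [hVeq]
        exact isProb_condWeight hnn _ v hv'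
      have hc : IndepRV (condWeight μ V v) ε3 T := by
        rw [hVeq]
        exact indep_condWeight h3 f v hv'
      have hc2 : IndepRV (condWeight μ V v)
          (fun ω => ((v.1 : NDT), g3 v.2 (ε3 ω))) pa :=
        indepRV_comp (C := A) hc (fun e => (v.1, g3 v.2 e)) (fun t => t.1)
      have hz0 : mutualInfo (condWeight μ V v) pa
          (fun ω => ((v.1 : NDT), g3 v.2 (ε3 ω))) = 0 :=
        mutualInfo_eq_zero_of_indep hprob hc2
      have hagree : ∀ ω, condWeight μ V v ω ≠ 0 →
          W ω = (v.1, g3 v.2 (ε3 ω)) := by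
        intro ω hω
        have hVv : V ω = v := by
          by_contra hne
          exact hω (by simp [condWeight, hne])
        have hnd1 : nd ω = v.1 := by rw [← hVv]
        have hY2 : Y ω = v.2 := by rw [← hVv]
        rw [hW]
        simp only
        rw [hnd1, hdc ω, hY2]
      rw [mutualInfo_congr pa hagree]
      exact hz0
  -- assemble via chain rules
  have hchain1 : mutualInfo μ pa (fun ω => (V ω, W ω))
      = mutualInfo μ pa W + condMutualInfo μ pa V W :=
    mutualInfo_chain hnn pa V W
  have hchain2 : mutualInfo μ pa (fun ω => (W ω, V ω))
      = mutualInfo μ pa V + condMutualInfo μ pa W V :=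
    mutualInfo_chain hnn pa W V
  have hswap : mutualInfo μ pa (fun ω => (V ω, W ω))
      = mutualInfo μ pa (fun ω => (W ω, V ω)) := by
    have := mutualInfo_comp_inj μ pa (fun ω => (W ω, V ω))
      (Prod.swap) Prod.swap_injective
    calc mutualInfo μ pa (fun ω => (V ω, W ω))
        = mutualInfo μ pa (fun ω => Prod.swap (W ω, V ω)) := rfl
      _ = mutualInfo μ pa (fun ω => (W ω, V ω)) := this
  have hcmi : 0 ≤ condMutualInfo μ pa V W := condMutualInfo_nonneg hnn pa V W
  calc mutualInfo μ pa W ≤ mutualInfo μ pa W + condMutualInfo μ pa V W :=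
        le_add_of_nonneg_right hcmi
    _ = mutualInfo μ pa (fun ω => (V ω, W ω)) := hchain1.symm
    _ = mutualInfo μ pa (fun ω => (W ω, V ω)) := hswap
    _ = mutualInfo μ pa V + condMutualInfo μ pa W V := hchain2
    _ = mutualInfo μ pa V := by rw [hD, add_zero]
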